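/- Let (C_n) be a sequence of sets in ℝ² with C_{n+1} ⊆ C_n, and suppose there exist constants C > 1 and 0 < r₁ ≤ r₂ < 1 such that C⁻¹·r₁^{m-k} ≤ diam(C_m)/diam(C_k) ≤ C·r₂^{m-k} for all m ≥ k. Fix x with x ∈ C_n for all n, and r > 0 with diam(C_0) ≥ r. Let n be minimal with C_n ⊆ B(x, r). Then diam(C_n) ≥ C⁻¹·r₁·r. -/
import Mathlib

theorem stmt11 (Cs : ℕ → Set (EuclideanSpace ℝ (Fin 2)))
    (hnest : ∀ n, Cs (n + 1) ⊆ Cs n)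
    (K r₁ r₂ : ℝ) (hK : 1 < K) (hr₁ : 0 < r₁) (hr₁₂ : r₁ ≤ r₂) (hr₂ : r₂ < 1)
    (hdiam : ∀ k m : ℕ, k ≤ m →
      K⁻¹ * r₁ ^ (m - k) ≤ Metric.diam (Cs m) / Metric.diam (Cs k) ∧
      Metric.diam (Cs m) / Metric.diam (Cs k) ≤ K * r₂ ^ (m - k))
    (x : EuclideanSpace ℝ (Fin 2)) (hx : ∀ n, x ∈ Cs n)
    (r : ℝ) (hr : 0 < r) (hr0 : r ≤ Metric.diam (Cs 0))
    (n : ℕ) (hn : Cs n ⊆ Metric.ball x r) (hmin : ∀ m < n, ¬ Cs m ⊆ Metric.ball x r) :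
    K⁻¹ * r₁ * r ≤ Metric.diam (Cs n) := by
  have hK0 : (0:ℝ) < K := lt_trans one_pos hK
  have hKinv : K⁻¹ * r₁ ≤ 1 := by
    have h1 : K⁻¹ ≤ 1 := by
      rw [inv_le_one_iff₀]; right; exact hK.le
    have h2 : r₁ ≤ 1 := le_of_lt (lt_of_le_of_lt hr₁₂ hr₂)
    calc K⁻¹ * r₁ ≤ 1 * 1 := by
          apply mul_le_mul h1 h2 hr₁.le zero_le_one
      _ = 1 := one_mul 1
  cases n with
  | zero =>
    calc K⁻¹ * r₁ * r ≤ 1 * r := by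
          apply mul_le_mul_of_nonneg_right hKinv hr.le
      _ = r := one_mul r
      _ ≤ _ := hr0
  | succ m =>
    have hnm : ¬ Cs m ⊆ Metric.ball x r := hmin m (Nat.lt_succ_self m)
    obtain ⟨y, hy, hyb⟩ := Set.not_subset.mp hnm
    have hdy : r ≤ dist y x := by
      simpa [Metric.mem_ball, not_lt] using hyb
    have hbm : Bornology.IsBounded (Cs m) := by
      by_contra hb
      have hz : Metric.diam (Cs m) = 0 := Metric.diam_eq_zero_of_unbounded hb
      have := (hdiam m (m+1) (Nat.le_succ m)).1
      rw [hz, div_zero] at this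
      have : (0:ℝ) < K⁻¹ * r₁ ^ (m+1-m) := by positivity
      linarith
    have hrm : r ≤ Metric.diam (Cs m) :=
      le_trans hdy (Metric.dist_le_diam_of_mem hbm hy (hx m))
    have hm0 : 0 < Metric.diam (Cs m) := lt_of_lt_of_le hr hrm
    have key := (hdiam m (m+1) (Nat.le_succ m)).1
    rw [show m+1-m = 1 from by omega, pow_one, le_div_iff₀ hm0] at key
    calc K⁻¹ * r₁ * r ≤ K⁻¹ * r₁ * Metric.diam (Cs m) := by
          apply mul_le_mul_of_nonneg_left hrm
          positivity
      _ ≤ _ := key
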